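/- Fix integers C and k with 1 ≤ k and k + 1 ≤ C, and fix a pair of indices (i, j) ∈ {1,…,C}². For every matrix F ∈ ℝ^{C×C}, the function t ↦ R_hard(F^{(t)}), where F^{(t)} agrees with F in all entries except that its (i,j) entry equals t, is convex on ℝ and admits a unique global minimizer. -/

import Mathlib

open Real

/-- softmax of a vector `v ∈ ℝ^d`: `softmax v j = exp (v j) / ∑ m, exp (v m)`. -/
noncomputable def softmax {d : ℕ} (v : Fin d → ℝ) : Fin d → ℝ :=
  fun j => Real.exp (v j) / ∑ m, Real.exp (v m)

/-- The hard OKO risk: `R_hard(F) = −∑ᵢ ∑_{S ∈ 𝕐ᵢ} log (softmax (2Fᵢ + ∑_{ℓ∈S} F_ℓ))ᵢ`,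
where `𝕐ᵢ` is the family of `k`-element subsets of `{1,…,C}` avoiding `i`. -/
noncomputable def Rhard {C : ℕ} (k : ℕ) (F : Fin C → Fin C → ℝ) : ℝ :=
  -∑ i : Fin C,
    ∑ S ∈ Finset.univ.filter (fun S : Finset (Fin C) => S.card = k ∧ i ∉ S),
      Real.log (softmax (fun j => 2 * F i j + ∑ ℓ ∈ S, F ℓ j) i)

/-! ### Auxiliary definitions -/

/-- The matrix `F` with entry `(i,j)` replaced by `t`. -/
def Ft {C : ℕ} (i j : Fin C) (F : Fin C → Fin C → ℝ) (t : ℝ) : Fin C → Fin C → ℝ :=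
  fun a b => if a = i ∧ b = j then t else F a b

/-- One term of the (rewritten) hard OKO risk. -/
noncomputable def termF {C : ℕ} (i j : Fin C) (F : Fin C → Fin C → ℝ)
    (i' : Fin C) (S : Finset (Fin C)) (t : ℝ) : ℝ :=
  Real.log (∑ m, Real.exp (2 * Ft i j F t i' m + ∑ ℓ ∈ S, Ft i j F t ℓ m))
    - (2 * Ft i j F t i' i' + ∑ ℓ ∈ S, Ft i j F t ℓ i')

lemma log_softmax {d : ℕ} (v : Fin d → ℝ) (i : Fin d) :
    Real.log (softmax v i) = v i - Real.log (∑ m, Real.exp (v m)) := by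
  have h : 0 < ∑ m, Real.exp (v m) :=
    Finset.sum_pos (fun m _ => Real.exp_pos _) ⟨i, Finset.mem_univ i⟩
  rw [softmax, Real.log_div (Real.exp_ne_zero _) h.ne', Real.log_exp]

lemma Rhard_eq {C : ℕ} (k : ℕ) (i j : Fin C) (F : Fin C → Fin C → ℝ) (t : ℝ) :
    Rhard k (Ft i j F t) =
      ∑ i' : Fin C,
        ∑ S ∈ Finset.univ.filter (fun S : Finset (Fin C) => S.card = k ∧ i' ∉ S),
          termF i j F i' S t := by
  rw [Rhard]
  rw [← Finset.sum_neg_distrib]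
  refine Finset.sum_congr rfl fun i' _ => ?_
  rw [← Finset.sum_neg_distrib]
  refine Finset.sum_congr rfl fun S _ => ?_
  rw [log_softmax, termF, neg_sub]

lemma termF_nonneg {C : ℕ} (i j : Fin C) (F : Fin C → Fin C → ℝ)
    (i' : Fin C) (S : Finset (Fin C)) (t : ℝ) :
    0 ≤ termF i j F i' S t := by
  rw [termF, sub_nonneg]
  set v : Fin C → ℝ := fun m => 2 * Ft i j F t i' m + ∑ ℓ ∈ S, Ft i j F t ℓ m with hv
  have h1 : Real.exp (v i') ≤ ∑ m, Real.exp (v m) :=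
    Finset.single_le_sum (fun m _ => (Real.exp_pos _).le) (Finset.mem_univ i')
  calc v i' = Real.log (Real.exp (v i')) := (Real.log_exp _).symm
    _ ≤ Real.log (∑ m, Real.exp (v m)) := Real.log_le_log (Real.exp_pos _) h1

/-! ### The core one-dimensional functions -/

lemma core_hasDerivAt (A B c d D : ℝ) (hD : 0 < D) (t : ℝ) :
    HasDerivAt (fun t => Real.log (Real.exp (A * t + B) + D) - (c * t + d))
      (Real.exp (A * t + B) * A / (Real.exp (A * t + B) + D) - c) t := by
  have h0 : HasDerivAt (fun t : ℝ => A * t + B) A t := by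
    simpa using ((hasDerivAt_id t).const_mul A).add_const B
  have h1 : HasDerivAt (fun t : ℝ => Real.exp (A * t + B) + D)
      (Real.exp (A * t + B) * A) t := h0.exp.add_const D
  have h2 := h1.log (by positivity)
  have h3 : HasDerivAt (fun t : ℝ => c * t + d) c t := by
    simpa using ((hasDerivAt_id t).const_mul c).add_const d
  exact h2.sub h3

lemma core_hasDerivAt2 (A B c D : ℝ) (hD : 0 < D) (t : ℝ) :
    HasDerivAt (fun t => Real.exp (A * t + B) * A / (Real.exp (A * t + B) + D) - c)
      (A ^ 2 * Real.exp (A * t + B) * D / (Real.exp (A * t + B) + D) ^ 2) t := by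
  have h0 : HasDerivAt (fun t : ℝ => A * t + B) A t := by
    simpa using ((hasDerivAt_id t).const_mul A).add_const B
  have h1 : HasDerivAt (fun t : ℝ => Real.exp (A * t + B) + D)
      (Real.exp (A * t + B) * A) t := h0.exp.add_const D
  have hu : HasDerivAt (fun t : ℝ => Real.exp (A * t + B) * A)
      (Real.exp (A * t + B) * A * A) t := h0.exp.mul_const A
  have hdiv := (hu.div h1 (by positivity)).sub_const c
  convert hdiv using 1
  have hne : Real.exp (A * t + B) + D ≠ 0 := by positivity
  iterate 3 rfl
  rw [div_eq_div_iff (by positivity) (by positivity)]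
  ring

lemma core_continuous (A B c d D : ℝ) (hD : 0 < D) :
    Continuous (fun t => Real.log (Real.exp (A * t + B) + D) - (c * t + d)) := by
  have h1 : Continuous (fun t : ℝ => Real.exp (A * t + B) + D) := by continuity
  exact (h1.log (fun t => by positivity)).sub (by continuity)

lemma core_strictConvexOn (A B c d D : ℝ) (hD : 0 < D) (hA : A ≠ 0) :
    StrictConvexOn ℝ Set.univ
      (fun t => Real.log (Real.exp (A * t + B) + D) - (c * t + d)) := by
  refine strictConvexOn_of_deriv2_pos convex_univ
    (core_continuous A B c d D hD).continuousOn (fun x _ => ?_)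
  have hderiv : deriv (fun t => Real.log (Real.exp (A * t + B) + D) - (c * t + d))
      = fun t => Real.exp (A * t + B) * A / (Real.exp (A * t + B) + D) - c :=
    funext fun t => (core_hasDerivAt A B c d D hD t).deriv
  have h2 : deriv^[2] (fun t => Real.log (Real.exp (A * t + B) + D) - (c * t + d)) x
      = A ^ 2 * Real.exp (A * x + B) * D / (Real.exp (A * x + B) + D) ^ 2 := by
    show deriv (deriv _) x = _
    rw [hderiv, (core_hasDerivAt2 A B c D hD x).deriv]
  rw [h2]
  have hA2 : 0 < A ^ 2 := by positivity
  positivity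

lemma core_convexOn (A B c d D : ℝ) (hD : 0 < D) :
    ConvexOn ℝ Set.univ
      (fun t => Real.log (Real.exp (A * t + B) + D) - (c * t + d)) := by
  have hderiv : deriv (fun t => Real.log (Real.exp (A * t + B) + D) - (c * t + d))
      = fun t => Real.exp (A * t + B) * A / (Real.exp (A * t + B) + D) - c :=
    funext fun t => (core_hasDerivAt A B c d D hD t).deriv
  refine convexOn_of_deriv2_nonneg convex_univ
    (core_continuous A B c d D hD).continuousOn
    (fun x _ => (core_hasDerivAt A B c d D hD x).differentiableAt.differentiableWithinAt)
    (fun x _ => ?_) (fun x _ => ?_)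
  · rw [hderiv]
    exact (core_hasDerivAt2 A B c D hD x).differentiableAt.differentiableWithinAt
  · have h2 : deriv^[2] (fun t => Real.log (Real.exp (A * t + B) + D) - (c * t + d)) x
        = A ^ 2 * Real.exp (A * x + B) * D / (Real.exp (A * x + B) + D) ^ 2 := by
      show deriv (deriv _) x = _
      rw [hderiv, (core_hasDerivAt2 A B c D hD x).deriv]
    rw [h2]
    positivity

lemma core_tendsto_atTop (A B c d D : ℝ) (hD : 0 < D) (hc : c < A) :
    Filter.Tendsto (fun t => Real.log (Real.exp (A * t + B) + D) - (c * t + d))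
      Filter.atTop Filter.atTop := by
  have hbase : Filter.Tendsto (fun t : ℝ => (A - c) * t + (B - d))
      Filter.atTop Filter.atTop :=
    Filter.tendsto_atTop_add_const_right _ _
      (Filter.Tendsto.const_mul_atTop (by linarith) Filter.tendsto_id)
  refine Filter.tendsto_atTop_mono (fun t => ?_) hbase
  have h1 : A * t + B ≤ Real.log (Real.exp (A * t + B) + D) :=
    (Real.le_log_iff_exp_le (by positivity)).2 (by linarith [Real.exp_pos (A * t + B)])
  nlinarith [h1]

lemma core_tendsto_atBot (A B c d D : ℝ) (hD : 0 < D) (hc : 0 < c) :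
    Filter.Tendsto (fun t => Real.log (Real.exp (A * t + B) + D) - (c * t + d))
      Filter.atBot Filter.atTop := by
  have hneg : Filter.Tendsto (fun t : ℝ => c * -t) Filter.atBot Filter.atTop :=
    Filter.Tendsto.const_mul_atTop hc Filter.tendsto_neg_atBot_atTop
  have hbase : Filter.Tendsto (fun t : ℝ => c * -t + (Real.log D - d))
      Filter.atBot Filter.atTop := Filter.tendsto_atTop_add_const_right _ _ hneg
  refine Filter.tendsto_atTop_mono (fun t => ?_) hbase
  have h1 : Real.log D ≤ Real.log (Real.exp (A * t + B) + D) :=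
    Real.log_le_log hD (by linarith [Real.exp_pos (A * t + B)])
  nlinarith [h1]

/-! ### Closed form of each term -/

lemma term_repr {C : ℕ} (hC : 2 ≤ C) (i j : Fin C) (F : Fin C → Fin C → ℝ)
    (i' : Fin C) (S : Finset (Fin C)) :
    ∃ B D d : ℝ, 0 < D ∧ ∀ t : ℝ,
      termF i j F i' S t =
        Real.log (Real.exp
            (((if i' = i then (2:ℝ) else 0) + (if i ∈ S then (1:ℝ) else 0)) * t + B) + D)
          - ((if i' = j then ((if i' = i then (2:ℝ) else 0) + (if i ∈ S then (1:ℝ) else 0))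
                else 0) * t + d) := by
  classical
  set A : ℝ := (if i' = i then (2:ℝ) else 0) + (if i ∈ S then (1:ℝ) else 0) with hA
  set B : ℝ := 2 * (if i' = i then 0 else F i' j) + ∑ ℓ ∈ S, (if ℓ = i then 0 else F ℓ j)
    with hB
  -- the `j`-th coordinate of the logits is affine in `t`
  have hj : ∀ t : ℝ, 2 * Ft i j F t i' j + ∑ ℓ ∈ S, Ft i j F t ℓ j = A * t + B := by
    intro t
    simp only [Ft, and_true]
    have hsum : ∑ ℓ ∈ S, (if ℓ = i then t else F ℓ j)
        = (if i ∈ S then t else 0) + ∑ ℓ ∈ S, (if ℓ = i then 0 else F ℓ j) := by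
      rw [Finset.sum_congr rfl
        (fun ℓ _ => show (if ℓ = i then t else F ℓ j)
          = (if ℓ = i then t else 0) + (if ℓ = i then 0 else F ℓ j) by split_ifs <;> ring)]
      rw [Finset.sum_add_distrib, Finset.sum_ite_eq' S i fun _ => t]
    rw [hsum, hA, hB]
    split_ifs <;> ring
  -- coordinates other than `j` are constant in `t`
  have hconst : ∀ (t : ℝ) (a : Fin C) (m : Fin C), m ≠ j → Ft i j F t a m = F a m := by
    intro t a m hm
    simp [Ft, hm]
  set D : ℝ := ∑ m ∈ Finset.univ.erase j, Real.exp (2 * F i' m + ∑ ℓ ∈ S, F ℓ m) with hDdef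
  have hDpos : 0 < D := by
    refine Finset.sum_pos (fun m _ => Real.exp_pos _) ?_
    rw [← Finset.card_pos, Finset.card_erase_of_mem (Finset.mem_univ j),
      Finset.card_univ, Fintype.card_fin]
    omega
  have hsum : ∀ t : ℝ,
      ∑ m, Real.exp (2 * Ft i j F t i' m + ∑ ℓ ∈ S, Ft i j F t ℓ m)
        = Real.exp (A * t + B) + D := by
    intro t
    rw [← Finset.add_sum_erase _ _ (Finset.mem_univ j), hj t]
    congr 1
    refine Finset.sum_congr rfl fun m hm => ?_
    have hmj : m ≠ j := Finset.ne_of_mem_erase hm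
    rw [hconst t i' m hmj, Finset.sum_congr rfl fun ℓ _ => hconst t ℓ m hmj]
  set c : ℝ := if i' = j then A else 0 with hc
  set d : ℝ := if i' = j then B else 2 * F i' i' + ∑ ℓ ∈ S, F ℓ i' with hd
  have hv : ∀ t : ℝ,
      2 * Ft i j F t i' i' + ∑ ℓ ∈ S, Ft i j F t ℓ i' = c * t + d := by
    intro t
    by_cases h : i' = j
    · subst h
      simp only [hc, hd, if_pos rfl]
      exact hj t
    · rw [hconst t i' i' h, Finset.sum_congr rfl fun ℓ _ => hconst t ℓ i' h]
      simp only [hc, hd, if_neg h]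
      ring
  refine ⟨B, D, d, hDpos, fun t => ?_⟩
  rw [termF, hsum t, hv t]

/-! ### Convexity and continuity of each term -/

lemma termF_convexOn {C : ℕ} (hC : 2 ≤ C) (i j : Fin C) (F : Fin C → Fin C → ℝ)
    (i' : Fin C) (S : Finset (Fin C)) :
    ConvexOn ℝ Set.univ (termF i j F i' S) := by
  obtain ⟨B, D, d, hD, hrepr⟩ := term_repr hC i j F i' S
  rw [show termF i j F i' S = _ from funext hrepr]
  exact core_convexOn _ _ _ _ _ hD

lemma termF_continuous {C : ℕ} (hC : 2 ≤ C) (i j : Fin C) (F : Fin C → Fin C → ℝ)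
    (i' : Fin C) (S : Finset (Fin C)) :
    Continuous (termF i j F i' S) := by
  obtain ⟨B, D, d, hD, hrepr⟩ := term_repr hC i j F i' S
  rw [show termF i j F i' S = _ from funext hrepr]
  exact core_continuous _ _ _ _ _ hD

lemma termF_strictConvexOn {C : ℕ} (hC : 2 ≤ C) (i j : Fin C) (F : Fin C → Fin C → ℝ)
    (S : Finset (Fin C)) :
    StrictConvexOn ℝ Set.univ (termF i j F i S) := by
  obtain ⟨B, D, d, hD, hrepr⟩ := term_repr hC i j F i S
  rw [show termF i j F i S = _ from funext hrepr]
  refine core_strictConvexOn _ _ _ _ _ hD ?_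
  have h2 : (if i = i then (2:ℝ) else 0) = 2 := if_pos rfl
  rw [h2]
  split_ifs <;> norm_num

/-- Convexity of a finite sum of convex functions. -/
lemma convexOn_finset_sum {α : Type*} [DecidableEq α] (P : Finset α) (f : α → ℝ → ℝ)
    (h : ∀ p ∈ P, ConvexOn ℝ Set.univ (f p)) :
    ConvexOn ℝ Set.univ (fun t => ∑ p ∈ P, f p t) := by
  induction P using Finset.induction with
  | empty => simpa using convexOn_const 0 convex_univ
  | @insert a s ha ih =>
    simp only [Finset.sum_insert ha]
    exact (h a (Finset.mem_insert_self a s)).add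
      (ih fun p hp => h p (Finset.mem_insert_of_mem hp))

theorem Rhard_coordinate_convex_unique_min {C k : ℕ} (hk : 1 ≤ k) (hkC : k + 1 ≤ C)
    (i j : Fin C) (F : Fin C → Fin C → ℝ) :
    ConvexOn ℝ Set.univ
        (fun t : ℝ => Rhard k (fun a b => if a = i ∧ b = j then t else F a b))
      ∧ ∃! t₀ : ℝ, ∀ t : ℝ,
          Rhard k (fun a b => if a = i ∧ b = j then t₀ else F a b)
            ≤ Rhard k (fun a b => if a = i ∧ b = j then t else F a b) := by
  classical
  have hC : 2 ≤ C := by omega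
  -- switch to the `Ft`/`termF` presentation
  have hGdef : ∀ t : ℝ, Rhard k (fun a b => if a = i ∧ b = j then t else F a b)
      = ∑ i' : Fin C,
          ∑ S ∈ Finset.univ.filter (fun S : Finset (Fin C) => S.card = k ∧ i' ∉ S),
            termF i j F i' S t := fun t => Rhard_eq k i j F t
  set G : ℝ → ℝ := fun t =>
    ∑ i' : Fin C,
      ∑ S ∈ Finset.univ.filter (fun S : Finset (Fin C) => S.card = k ∧ i' ∉ S),
        termF i j F i' S t with hG
  have hGrw : (fun t : ℝ => Rhard k (fun a b => if a = i ∧ b = j then t else F a b)) = G :=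
    funext hGdef
  -- the family 𝕐_i is nonempty
  have hY : ∀ i' : Fin C, ∃ S : Finset (Fin C), S.card = k ∧ i' ∉ S := by
    intro i'
    have hcard : k ≤ (Finset.univ.erase i').card := by
      rw [Finset.card_erase_of_mem (Finset.mem_univ i'), Finset.card_univ, Fintype.card_fin]
      omega
    obtain ⟨S, hS, hSc⟩ := Finset.exists_subset_card_eq hcard
    exact ⟨S, hSc, fun h => (Finset.mem_erase.1 (hS h)).1 rfl⟩
  obtain ⟨S₀, hS₀c, hS₀i⟩ := hY i
  have hS₀mem : S₀ ∈ Finset.univ.filter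
      (fun S : Finset (Fin C) => S.card = k ∧ i ∉ S) := by
    simp [hS₀c, hS₀i]
  -- strict convexity of G
  have hstrict : StrictConvexOn ℝ Set.univ G := by
    have hinner : ∀ i' : Fin C, ConvexOn ℝ Set.univ
        (fun t => ∑ S ∈ Finset.univ.filter
            (fun S : Finset (Fin C) => S.card = k ∧ i' ∉ S), termF i j F i' S t) :=
      fun i' => convexOn_finset_sum _ _ fun S _ => termF_convexOn hC i j F i' S
    have hsplit : G = fun t =>
        (termF i j F i S₀ t
          + ∑ S ∈ (Finset.univ.filter
              (fun S : Finset (Fin C) => S.card = k ∧ i ∉ S)).erase S₀,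
            termF i j F i S t)
        + ∑ i' ∈ Finset.univ.erase i,
            ∑ S ∈ Finset.univ.filter
                (fun S : Finset (Fin C) => S.card = k ∧ i' ∉ S), termF i j F i' S t := by
      funext t
      simp only [hG]
      rw [← Finset.add_sum_erase _ _ (Finset.mem_univ i),
        ← Finset.add_sum_erase _ _ hS₀mem]
    rw [hsplit]
    refine StrictConvexOn.add_convexOn (StrictConvexOn.add_convexOn
      (termF_strictConvexOn hC i j F S₀)
      (convexOn_finset_sum _ _ fun S _ => termF_convexOn hC i j F i S)) ?_
    exact convexOn_finset_sum _ _ fun i' _ =>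
      convexOn_finset_sum _ _ fun S _ => termF_convexOn hC i j F i' S
  -- pointwise lower bound of G by a single term
  have hlb : ∀ (i' : Fin C) (S : Finset (Fin C)),
      S ∈ Finset.univ.filter (fun S : Finset (Fin C) => S.card = k ∧ i' ∉ S) →
      ∀ t, termF i j F i' S t ≤ G t := by
    intro i' S hS t
    have h1 : termF i j F i' S t ≤ ∑ S' ∈ Finset.univ.filter
        (fun S' : Finset (Fin C) => S'.card = k ∧ i' ∉ S'), termF i j F i' S' t :=
      Finset.single_le_sum (fun S' _ => termF_nonneg i j F i' S' t) hS
    have h2 := Finset.single_le_sum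
      (f := fun a : Fin C => ∑ S' ∈ Finset.univ.filter
        (fun S' : Finset (Fin C) => S'.card = k ∧ a ∉ S'), termF i j F a S' t)
      (fun a _ => Finset.sum_nonneg fun S' _ => termF_nonneg i j F a S' t)
      (Finset.mem_univ i')
    simp only [hG]
    exact le_trans h1 h2
  -- a subset of size k containing i and avoiding a given i'' ≠ i
  have hS1 : ∀ i'' : Fin C, i'' ≠ i → ∃ S : Finset (Fin C),
      S.card = k ∧ i'' ∉ S ∧ i ∈ S := by
    intro i'' hne
    have hcard : k - 1 ≤ ((Finset.univ.erase i'').erase i).card := by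
      rw [Finset.card_erase_of_mem
          (Finset.mem_erase.2 ⟨Ne.symm hne, Finset.mem_univ i⟩),
        Finset.card_erase_of_mem (Finset.mem_univ i''),
        Finset.card_univ, Fintype.card_fin]
      omega
    obtain ⟨S', hS'sub, hS'c⟩ := Finset.exists_subset_card_eq hcard
    have hiS' : i ∉ S' := fun h => (Finset.mem_erase.1 (hS'sub h)).1 rfl
    have hi''S' : i'' ∉ S' := fun h =>
      (Finset.mem_erase.1 (Finset.mem_of_mem_erase (hS'sub h))).1 rfl
    refine ⟨insert i S', ?_, ?_, Finset.mem_insert_self i S'⟩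
    · rw [Finset.card_insert_of_notMem hiS', hS'c]; omega
    · intro h
      rcases Finset.mem_insert.1 h with h | h
      · exact hne h
      · exact hi''S' h
  -- coercivity at +∞
  have htop : Filter.Tendsto G Filter.atTop Filter.atTop := by
    by_cases hij : i = j
    · -- use a term with i' ≠ i and i ∈ S
      obtain ⟨i'', hi''⟩ : ∃ i'' : Fin C, i'' ≠ i := by
        have : 1 < Fintype.card (Fin C) := by rw [Fintype.card_fin]; omega
        exact Fintype.exists_ne_of_one_lt_card this i
      obtain ⟨S₁, hS₁c, hS₁i'', hS₁i⟩ := hS1 i'' hi''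
      have hmem : S₁ ∈ Finset.univ.filter
          (fun S : Finset (Fin C) => S.card = k ∧ i'' ∉ S) := by simp [hS₁c, hS₁i'']
      obtain ⟨B, D, d, hD, hrepr⟩ := term_repr hC i j F i'' S₁
      have hAval : ((if i'' = i then (2:ℝ) else 0) + (if i ∈ S₁ then (1:ℝ) else 0)) = 1 := by
        rw [if_neg hi'', if_pos hS₁i]; ring
      have hcval : (if i'' = j then (1:ℝ) else 0) = 0 :=
        if_neg (fun h => hi'' (h.trans hij.symm))
      have hterm : Filter.Tendsto (termF i j F i'' S₁) Filter.atTop Filter.atTop := by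
        rw [show termF i j F i'' S₁ = _ from funext hrepr, hAval, hcval]
        exact core_tendsto_atTop 1 B 0 d D hD (by norm_num)
      exact Filter.tendsto_atTop_mono (fun t => hlb i'' S₁ hmem t) hterm
    · -- use the term (i, S₀)
      obtain ⟨B, D, d, hD, hrepr⟩ := term_repr hC i j F i S₀
      have hAval : ((if i = i then (2:ℝ) else 0) + (if i ∈ S₀ then (1:ℝ) else 0)) = 2 := by
        rw [if_pos rfl, if_neg hS₀i]; ring
      have hcval : (if i = j then (2:ℝ) else 0) = 0 := if_neg hij
      have hterm : Filter.Tendsto (termF i j F i S₀) Filter.atTop Filter.atTop := by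
        rw [show termF i j F i S₀ = _ from funext hrepr, hAval, hcval]
        exact core_tendsto_atTop 2 B 0 d D hD (by norm_num)
      exact Filter.tendsto_atTop_mono (fun t => hlb i S₀ hS₀mem t) hterm
  -- coercivity at -∞
  have hbot : Filter.Tendsto G Filter.atBot Filter.atTop := by
    by_cases hij : i = j
    · -- use the term (i, S₀): its coefficient c equals 2
      obtain ⟨B, D, d, hD, hrepr⟩ := term_repr hC i j F i S₀
      have hAval : ((if i = i then (2:ℝ) else 0) + (if i ∈ S₀ then (1:ℝ) else 0)) = 2 := by
        rw [if_pos rfl, if_neg hS₀i]; ring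
      have hcval : (if i = j then (2:ℝ) else 0) = 2 := if_pos hij
      have hterm : Filter.Tendsto (termF i j F i S₀) Filter.atBot Filter.atTop := by
        rw [show termF i j F i S₀ = _ from funext hrepr, hAval, hcval]
        exact core_tendsto_atBot 2 B 2 d D hD (by norm_num)
      exact Filter.tendsto_atTop_mono (fun t => hlb i S₀ hS₀mem t) hterm
    · -- use the term (j, S₂) with i ∈ S₂
      have hji : j ≠ i := fun h => hij h.symm
      obtain ⟨S₂, hS₂c, hS₂j, hS₂i⟩ := hS1 j hji
      have hmem : S₂ ∈ Finset.univ.filter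
          (fun S : Finset (Fin C) => S.card = k ∧ j ∉ S) := by simp [hS₂c, hS₂j]
      obtain ⟨B, D, d, hD, hrepr⟩ := term_repr hC i j F j S₂
      have hAval : ((if j = i then (2:ℝ) else 0) + (if i ∈ S₂ then (1:ℝ) else 0)) = 1 := by
        rw [if_neg hji, if_pos hS₂i]; ring
      have hcval : (if j = j then (1:ℝ) else 0) = 1 := if_pos rfl
      have hterm : Filter.Tendsto (termF i j F j S₂) Filter.atBot Filter.atTop := by
        rw [show termF i j F j S₂ = _ from funext hrepr, hAval, hcval]
        exact core_tendsto_atBot 1 B 1 d D hD (by norm_num)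
      exact Filter.tendsto_atTop_mono (fun t => hlb j S₂ hmem t) hterm
  -- continuity
  have hcont : Continuous G := by
    rw [hG]
    exact continuous_finset_sum _ fun i' _ =>
      continuous_finset_sum _ fun S _ => termF_continuous hC i j F i' S
  -- existence of a global minimizer
  have hcoc : Filter.Tendsto G (Filter.cocompact ℝ) Filter.atTop := by
    rw [cocompact_eq_atBot_atTop]
    exact Filter.tendsto_sup.2 ⟨hbot, htop⟩
  obtain ⟨t₀, ht₀⟩ := hcont.exists_forall_le hcoc
  refine ⟨hGrw ▸ hstrict.convexOn, t₀, ?_, ?_⟩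
  · intro t
    rw [hGdef, hGdef]
    exact ht₀ t
  · intro t₁ ht₁
    simp only [hGdef] at ht₁
    by_contra hne
    have heq : G t₀ = G t₁ := le_antisymm (ht₀ t₁) (ht₁ t₀)
    have hmid := hstrict.2 (Set.mem_univ t₁) (Set.mem_univ t₀) hne
      (by norm_num : (0:ℝ) < 1/2) (by norm_num : (0:ℝ) < 1/2) (by norm_num)
    have hmid' : G ((1/2 : ℝ) • t₁ + (1/2 : ℝ) • t₀) < G t₀ := by
      rw [← heq] at hmid
      calc G ((1/2 : ℝ) • t₁ + (1/2 : ℝ) • t₀)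
          < (1/2 : ℝ) * G t₀ + (1/2 : ℝ) * G t₀ := by
            simpa [smul_eq_mul] using hmid
        _ = G t₀ := by ring
    exact absurd (ht₀ ((1/2 : ℝ) • t₁ + (1/2 : ℝ) • t₀)) (not_le.2 hmid')
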